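/- Let M₀,...,Mₙ and N₀,...,Nₙ (n ≥ 1) be subspaces (not necessarily closed) of a Hilbert space. Define T₁(i₀,i₁) = (M_{i₀}+M_{i₁}) ∩ (N_{i₀}+N_{i₁}) and recursively T_m(i₀,...,i_m) = T_{m-1}(i₀,i₁,i₃,...,i_m) ∩ (T_{m-1}(i₀,i₂,i₃,...,i_m) + T_{m-1}(i₁,i₂,i₃,...,i_m)) for 2 ≤ m ≤ n. Then (M₀+N₀) ∩ ⋯ ∩ (Mₙ+Nₙ) ⊆ N₀ + (M₀ ∩ (M₁ + Tₙ(0,...,n))). -/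

import Mathlib

/-- The recursively defined subspace terms of the generalized orthoarguesian
condition.  `Tsub M N m i` is the paper's `T_{m+1}(i 0, …, i (m+1))`; subspace
sum of submodules is `⊔` and intersection is `⊓`.
Base case: `T₁(i₀,i₁) = (M i₀ + M i₁) ∩ (N i₀ + N i₁)`.
Recursion: `T_m(i₀,…,i_m) = T_{m-1}(i₀,i₁,i₃,…,i_m) ∩
(T_{m-1}(i₀,i₂,i₃,…,i_m) + T_{m-1}(i₁,i₂,i₃,…,i_m))`, where deleting the k-th
index from the tuple `i` is realized by composing with `Fin.succAbove k`. -/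
def Tsub {H : Type*} [AddCommGroup H] [Module ℂ H] {n : ℕ}
    (M N : Fin (n + 1) → Submodule ℂ H) :
    (m : ℕ) → (Fin (m + 2) → Fin (n + 1)) → Submodule ℂ H
  | 0, i => (M (i 0) ⊔ M (i 1)) ⊓ (N (i 0) ⊔ N (i 1))
  | m + 1, i =>
      Tsub M N m (i ∘ Fin.succAbove 2) ⊓
        (Tsub M N m (i ∘ Fin.succAbove 1) ⊔ Tsub M N m (i ∘ Fin.succAbove 0))

/-- Generalized orthoarguesian subspace condition (n = k+1 ≥ 1):
`(M₀+N₀) ∩ ⋯ ∩ (Mₙ+Nₙ) ⊆ N₀ + (M₀ ∩ (M₁ + Tₙ(0,…,n)))` for arbitrary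
(not necessarily closed) subspaces of a Hilbert space. -/
theorem stmt_10 {H : Type*} [NormedAddCommGroup H] [InnerProductSpace ℂ H]
    [CompleteSpace H] (k : ℕ) (M N : Fin (k + 2) → Submodule ℂ H) :
    (⨅ i, M i ⊔ N i) ≤ N 0 ⊔ (M 0 ⊓ (M 1 ⊔ Tsub M N k id)) := by
  intro x hx
  have hx' : ∀ i, x ∈ M i ⊔ N i := (Submodule.mem_iInf _).mp hx
  choose a ha b hb hab using fun i => Submodule.mem_sup.mp (hx' i)
  -- key: all differences of the a's belong to every Tsub term
  have key : ∀ m (i : Fin (m + 2) → Fin (k + 2)),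
      a (i 0) - a (i 1) ∈ Tsub M N m i := by
    intro m
    induction m with
    | zero =>
      intro i
      refine Submodule.mem_inf.mpr ⟨?_, ?_⟩
      · exact Submodule.sub_mem_sup (ha (i 0)) (ha (i 1))
      · have : a (i 0) - a (i 1) = -(b (i 0) - b (i 1)) := by
          rw [neg_sub, sub_eq_sub_iff_add_eq_add, hab (i 0), add_comm]
          exact (hab (i 1)).symm
        rw [this]
        exact neg_mem (Submodule.sub_mem_sup (hb (i 0)) (hb (i 1)))
    | succ m ih =>
      intro i
      refine Submodule.mem_inf.mpr ⟨?_, ?_⟩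
      · have h := ih (i ∘ Fin.succAbove 2)
        exact h
      · have h1 := ih (i ∘ Fin.succAbove 1)
        have h0 := ih (i ∘ Fin.succAbove 0)
        have e1 : (i ∘ Fin.succAbove 1) 0 = i 0 := rfl
        have e2 : (i ∘ Fin.succAbove 1) 1 = i 2 := rfl
        have e3 : (i ∘ Fin.succAbove 0) 0 = i 1 := rfl
        have e4 : (i ∘ Fin.succAbove 0) 1 = i 2 := rfl
        rw [e1, e2] at h1
        rw [e3, e4] at h0
        have : a (i 0) - a (i 1) = (a (i 0) - a (i 2)) - (a (i 1) - a (i 2)) := by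
          abel
        rw [this]
        exact Submodule.sub_mem_sup h1 h0
  have ha01 : a 0 - a 1 ∈ Tsub M N k id := key k id
  have hxeq : x = b 0 + a 0 := by rw [← hab 0]; abel
  rw [hxeq]
  refine Submodule.add_mem_sup (hb 0) (Submodule.mem_inf.mpr ⟨ha 0, ?_⟩)
  have : a 0 = a 1 + (a 0 - a 1) := by abel
  rw [this]
  exact Submodule.add_mem_sup (ha 1) ha01
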